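/- Let M be a vertex cover of a finite simple graph G with colored vertices, and let P be a fair clustering of G containing a cluster C with C ∩ M = ∅ and |C| > c̃ (the fairlet size). Then there exists a fair clustering P' of G with cost(P') < cost(P). -/

import Mathlib

open Finset

open scoped Classical

noncomputable section

variable {V : Type*}

/-- Two vertices lie in the same cluster of the clustering `P`. -/
def sameCluster [Fintype V] (P : Finpartition (Finset.univ : Finset V)) (v w : V) : Prop :=
  ∃ t ∈ P.parts, v ∈ t ∧ w ∈ t

/-- The cost of a clustering of the vertex set of `G`: the number of edges of `G` with
endpoints in different clusters plus the number of non-adjacent (unordered) pairs of distinct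
vertices lying in the same cluster. (Ordered pairs are counted and divided by two.) -/
def clusterCost [Fintype V] (G : SimpleGraph V)
    (P : Finpartition (Finset.univ : Finset V)) : ℕ :=
  (Finset.univ.offDiag.filter fun p : V × V => G.Adj p.1 p.2 ∧ ¬ sameCluster P p.1 p.2).card / 2
    + (Finset.univ.offDiag.filter fun p : V × V =>
        ¬ G.Adj p.1 p.2 ∧ sameCluster P p.1 p.2).card / 2

/-- A finite vertex set `W` is fair w.r.t. the coloring `χ` and the fairlet vector `c`
if for some `d : ℕ` it contains exactly `d * c i` vertices of each color `i`. -/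
def IsFair {κ : ℕ} (χ : V → Fin κ) (c : Fin κ → ℕ) (W : Finset V) : Prop :=
  ∃ d : ℕ, ∀ i : Fin κ, (W.filter fun v => χ v = i).card = d * c i

/-- A clustering is fair if each of its clusters is fair. -/
def IsFairClustering [Fintype V] {κ : ℕ} (χ : V → Fin κ) (c : Fin κ → ℕ)
    (P : Finpartition (Finset.univ : Finset V)) : Prop :=
  ∀ t ∈ P.parts, IsFair χ c t

/-- The partition of a finset `C` into a nonempty proper subset `C1` and its complement. -/
def twoPartsFP [DecidableEq V] (C C1 : Finset V) (h1 : C1 ⊆ C) (hne1 : C1.Nonempty)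
    (hne2 : (C \ C1).Nonempty) : Finpartition C where
  parts := {C1, C \ C1}
  supIndep := by
    have hne : C1 ≠ C \ C1 := by
      intro h
      obtain ⟨x, hx⟩ := hne1
      have := h ▸ hx
      simp only [Finset.mem_sdiff] at this
      exact this.2 hx
    rw [Finset.supIndep_pair hne]
    exact Finset.disjoint_sdiff
  sup_parts := by
    simp only [Finset.sup_insert, Finset.sup_singleton, id_eq, Finset.sup_eq_union]
    exact Finset.union_sdiff_of_subset h1
  bot_notMem := by
    simp only [Finset.bot_eq_empty, Finset.mem_insert, Finset.mem_singleton]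
    push_neg
    exact ⟨hne1.ne_empty.symm, hne2.ne_empty.symm⟩

/-- If `M` is a vertex cover of `G` and the fair clustering `P` contains a
cluster `C` disjoint from `M` of size larger than the fairlet size `c̃ = ∑ i, c i`, then some
fair clustering `P'` has strictly smaller cost than `P`. -/
theorem exists_cheaper_fair_clustering_of_large_independent_cluster
    {V : Type*} [Fintype V] {κ : ℕ} (G : SimpleGraph V)
    (χ : V → Fin κ) (c : Fin κ → ℕ) (hc : c ≠ 0)
    (M : Finset V) (hM : ∀ v w : V, G.Adj v w → v ∈ M ∨ w ∈ M)
    (P : Finpartition (Finset.univ : Finset V))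
    (hPfair : IsFairClustering χ c P)
    (C : Finset V) (hC : C ∈ P.parts) (hCM : C ∩ M = ∅)
    (hCbig : (∑ i, c i) < C.card) :
    ∃ P' : Finpartition (Finset.univ : Finset V),
      IsFairClustering χ c P' ∧ clusterCost G P' < clusterCost G P := by
  classical
  -- C is independent
  have hCind : ∀ v ∈ C, ∀ w ∈ C, ¬ G.Adj v w := by
    intro v hv w hw hadj
    rcases hM v w hadj with h | h
    · exact absurd (Finset.mem_inter.2 ⟨hv, h⟩) (by simp [hCM])
    · exact absurd (Finset.mem_inter.2 ⟨hw, h⟩) (by simp [hCM])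
  -- fairness data of C
  obtain ⟨d, hd⟩ := hPfair C hC
  have hCcard : C.card = d * ∑ i, c i := by
    rw [Finset.card_eq_sum_card_fiberwise (f := χ) (t := Finset.univ) (fun x _ => Finset.mem_univ _)]
    rw [Finset.mul_sum]
    exact Finset.sum_congr rfl fun i _ => hd i
  have hsum_pos : 0 < ∑ i, c i := by
    rcases Nat.eq_zero_or_pos (∑ i, c i) with h | h
    · rw [hCcard, h, mul_zero] at hCbig; omega
    · exact h
  have hd2 : 2 ≤ d := by
    by_contra h
    push_neg at h
    interval_cases d <;> simp_all <;> omega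
  -- choose the subset C1 of C with c i vertices of each color i
  have hchoose : ∀ i : Fin κ, ∃ S : Finset V, S ⊆ C.filter (fun v => χ v = i) ∧ S.card = c i := by
    intro i
    apply Finset.exists_subset_card_eq
    rw [hd i]
    nlinarith
  choose S hS1 hS2 using hchoose
  set C1 : Finset V := Finset.univ.biUnion S with hC1def
  have hS1' : ∀ i, S i ⊆ C := fun i => (hS1 i).trans (Finset.filter_subset _ _)
  have hScolor : ∀ i, ∀ v ∈ S i, χ v = i := by
    intro i v hv
    have := hS1 i hv
    simp only [Finset.mem_filter] at this
    exact this.2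
  have hC1sub : C1 ⊆ C := by
    intro v hv
    simp only [hC1def, Finset.mem_biUnion] at hv
    obtain ⟨i, _, hi⟩ := hv
    exact hS1' i hi
  have hC1filter : ∀ i : Fin κ, C1.filter (fun v => χ v = i) = S i := by
    intro i
    ext v
    simp only [Finset.mem_filter, hC1def, Finset.mem_biUnion, Finset.mem_univ, true_and]
    constructor
    · rintro ⟨⟨j, hj⟩, hvi⟩
      have := hScolor j v hj
      rw [this] at hvi; subst hvi; exact hj
    · intro hv
      exact ⟨⟨i, hv⟩, hScolor i v hv⟩
  have hC1card : C1.card = ∑ i, c i := by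
    rw [hC1def, Finset.card_biUnion]
    · exact Finset.sum_congr rfl fun i _ => hS2 i
    · intro i _ j _ hij
      rw [Function.onFun, Finset.disjoint_left]
      intro v hvi hvj
      exact hij ((hScolor i v hvi).symm.trans (hScolor j v hvj))
  have hC2filter : ∀ i : Fin κ, (C \ C1).filter (fun v => χ v = i) =
      C.filter (fun v => χ v = i) \ C1.filter (fun v => χ v = i) := by
    intro i
    ext v
    simp only [Finset.mem_filter, Finset.mem_sdiff]
    tauto
  have hC2card : ∀ i : Fin κ, ((C \ C1).filter (fun v => χ v = i)).card = (d - 1) * c i := by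
    intro i
    rw [hC2filter i, Finset.card_sdiff_of_subset]
    · rw [hd i, hC1filter i, hS2 i, Nat.sub_one_mul]
    · rw [hC1filter i]; exact hS1 i
  have hne1 : C1.Nonempty := by
    rw [← Finset.card_pos, hC1card]; exact hsum_pos
  have hne2 : (C \ C1).Nonempty := by
    rw [← Finset.card_pos, Finset.card_sdiff_of_subset hC1sub, hCcard, hC1card]
    have h := Nat.mul_le_mul_right (∑ i, c i) hd2
    omega
  -- build the new partition
  set Q : ∀ A ∈ P.parts, Finpartition A := fun A hA =>
    if h : A = C then h ▸ twoPartsFP C C1 hC1sub hne1 hne2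
    else Finpartition.indiscrete (P.nonempty_of_mem_parts hA).ne_empty with hQdef
  set P' : Finpartition (Finset.univ : Finset V) := P.bind Q with hP'def
  have hmem : ∀ t : Finset V, t ∈ P'.parts ↔
      (t = C1 ∨ t = C \ C1) ∨ (t ∈ P.parts ∧ t ≠ C) := by
    intro t
    rw [hP'def, Finpartition.mem_bind]
    constructor
    · rintro ⟨A, hA, ht⟩
      by_cases h : A = C
      · subst h
        rw [hQdef] at ht
        simp only [dif_pos] at ht
        simp only [twoPartsFP, Finset.mem_insert, Finset.mem_singleton] at ht
        exact Or.inl ht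
      · rw [hQdef] at ht
        simp only [dif_neg h] at ht
        simp only [Finpartition.indiscrete, Finset.mem_singleton] at ht
        subst ht
        exact Or.inr ⟨hA, h⟩
    · rintro ((rfl | rfl) | ⟨ht, hne⟩)
      · exact ⟨C, hC, by simp [hQdef, twoPartsFP]⟩
      · exact ⟨C, hC, by simp [hQdef, twoPartsFP]⟩
      · exact ⟨t, ht, by simp [hQdef, dif_neg hne, Finpartition.indiscrete]⟩
  -- same-cluster characterization
  have hsame : ∀ v w : V, sameCluster P' v w ↔
      ((v ∈ C1 ∧ w ∈ C1) ∨ (v ∈ C \ C1 ∧ w ∈ C \ C1)) ∨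
        (∃ t ∈ P.parts, t ≠ C ∧ v ∈ t ∧ w ∈ t) := by
    intro v w
    constructor
    · rintro ⟨t, ht, hv, hw⟩
      rcases (hmem t).1 ht with (rfl | rfl) | ⟨ht', hne⟩
      · exact Or.inl (Or.inl ⟨hv, hw⟩)
      · exact Or.inl (Or.inr ⟨hv, hw⟩)
      · exact Or.inr ⟨t, ht', hne, hv, hw⟩
    · rintro ((⟨hv, hw⟩ | ⟨hv, hw⟩) | ⟨t, ht, hne, hv, hw⟩)
      · exact ⟨C1, (hmem C1).2 (Or.inl (Or.inl rfl)), hv, hw⟩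
      · exact ⟨C \ C1, (hmem _).2 (Or.inl (Or.inr rfl)), hv, hw⟩
      · exact ⟨t, (hmem t).2 (Or.inr ⟨ht, hne⟩), hv, hw⟩
  have himp : ∀ v w : V, sameCluster P' v w → sameCluster P v w := by
    intro v w h
    rcases (hsame v w).1 h with (⟨hv, hw⟩ | ⟨hv, hw⟩) | ⟨t, ht, _, hv, hw⟩
    · exact ⟨C, hC, hC1sub hv, hC1sub hw⟩
    · exact ⟨C, hC, (Finset.sdiff_subset) hv, (Finset.sdiff_subset) hw⟩
    · exact ⟨t, ht, hv, hw⟩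
  -- the adjacent (cut-edge) part is unchanged
  have hedges : (Finset.univ.offDiag.filter fun p : V × V =>
      G.Adj p.1 p.2 ∧ ¬ sameCluster P' p.1 p.2) =
      (Finset.univ.offDiag.filter fun p : V × V => G.Adj p.1 p.2 ∧ ¬ sameCluster P p.1 p.2) := by
    apply Finset.filter_congr
    intro p _
    constructor
    · rintro ⟨hadj, hns⟩
      refine ⟨hadj, fun hs => hns ?_⟩
      obtain ⟨t, ht, hv, hw⟩ := hs
      by_cases h : t = C
      · subst h
        exact absurd hadj (hCind _ hv _ hw)
      · exact (hsame _ _).2 (Or.inr ⟨t, ht, h, hv, hw⟩)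
    · rintro ⟨hadj, hns⟩
      exact ⟨hadj, fun hs => hns (himp _ _ hs)⟩
  -- the non-adjacent same-cluster part strictly decreases
  set A : Finset (V × V) := Finset.univ.offDiag.filter fun p : V × V =>
    ¬ G.Adj p.1 p.2 ∧ sameCluster P p.1 p.2 with hAdef
  set A' : Finset (V × V) := Finset.univ.offDiag.filter fun p : V × V =>
    ¬ G.Adj p.1 p.2 ∧ sameCluster P' p.1 p.2 with hA'def
  obtain ⟨v, hv⟩ := hne1
  obtain ⟨w, hw⟩ := hne2
  have hvC : v ∈ C := hC1sub hv
  have hwC : w ∈ C := Finset.sdiff_subset hw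
  have hvw : v ≠ w := by
    intro h
    subst h
    exact (Finset.mem_sdiff.1 hw).2 hv
  have hnadj : ¬ G.Adj v w := hCind v hvC w hwC
  have hmemA1 : (v, w) ∈ A := by
    simp only [hAdef, Finset.mem_filter, Finset.mem_offDiag, Finset.mem_univ, true_and]
    exact ⟨hvw, hnadj, C, hC, hvC, hwC⟩
  have hmemA2 : (w, v) ∈ A := by
    simp only [hAdef, Finset.mem_filter, Finset.mem_offDiag, Finset.mem_univ, true_and]
    exact ⟨hvw.symm, fun h => hnadj h.symm, C, hC, hwC, hvC⟩
  have hnotsame : ¬ sameCluster P' v w := by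
    intro hs
    rcases (hsame v w).1 hs with (⟨_, hw'⟩ | ⟨hv', _⟩) | ⟨t, ht, hne, hv', _⟩
    · exact (Finset.mem_sdiff.1 hw).2 hw'
    · exact (Finset.mem_sdiff.1 hv').2 hv
    · exact hne (P.eq_of_mem_parts ht hC hv' hvC)
  have hnotsame' : ¬ sameCluster P' w v := by
    intro ⟨t, ht, hw', hv'⟩
    exact hnotsame ⟨t, ht, hv', hw'⟩
  have hsub : A' ⊆ (A.erase (v, w)).erase (w, v) := by
    intro p hp
    simp only [hA'def, Finset.mem_filter] at hp
    obtain ⟨hpd, hna, hs⟩ := hp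
    rw [Finset.mem_erase, Finset.mem_erase]
    refine ⟨?_, ?_, ?_⟩
    · rintro rfl; exact hnotsame' hs
    · rintro rfl; exact hnotsame hs
    · simp only [hAdef, Finset.mem_filter]
      exact ⟨hpd, hna, himp _ _ hs⟩
  have hcard2 : 2 ≤ A.card := by
    have : ({(v, w), (w, v)} : Finset (V × V)) ⊆ A := by
      intro p hp
      simp only [Finset.mem_insert, Finset.mem_singleton] at hp
      rcases hp with rfl | rfl
      · exact hmemA1
      · exact hmemA2
    have h2 : ({(v, w), (w, v)} : Finset (V × V)).card = 2 := by
      rw [Finset.card_insert_of_notMem, Finset.card_singleton]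
      simp only [Finset.mem_singleton, Prod.mk.injEq, not_and]
      intro h; exact absurd h hvw
    calc 2 = ({(v, w), (w, v)} : Finset (V × V)).card := h2.symm
      _ ≤ A.card := Finset.card_le_card this
  have hcardle : A'.card ≤ A.card - 2 := by
    have h1 : (w, v) ∈ A.erase (v, w) := by
      rw [Finset.mem_erase]
      exact ⟨by simp [Prod.ext_iff]; intro h; exact absurd h hvw.symm, hmemA2⟩
    calc A'.card ≤ ((A.erase (v, w)).erase (w, v)).card := Finset.card_le_card hsub
      _ = (A.erase (v, w)).card - 1 := Finset.card_erase_of_mem h1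
      _ = A.card - 1 - 1 := by rw [Finset.card_erase_of_mem hmemA1]
      _ = A.card - 2 := by omega
  -- fairness of P'
  refine ⟨P', ?_, ?_⟩
  · intro t ht
    rcases (hmem t).1 ht with (rfl | rfl) | ⟨ht', _⟩
    · exact ⟨1, fun i => by rw [hC1filter i, hS2 i, one_mul]⟩
    · exact ⟨d - 1, fun i => hC2card i⟩
    · exact hPfair t ht'
  · rw [clusterCost, clusterCost, hedges, ← hAdef, ← hA'def]
    omega

end
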